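/- With η* = √(2/3), the integral ∫ from η* to 0 of √(2ψ)/√(ψ + 2η*) dψ equals (2 log(2 + √3))/√3 − 2. -/

import Mathlib

open Real intervalIntegral

/-- With `η* = √(2/3)`, `∫_{η*}^{0} √(2ψ)/√(ψ + 2η*) dψ = 2 log(2+√3)/√3 − 2`. -/
theorem stmt_3 :
    let η : ℝ := Real.sqrt (2 / 3)
    (∫ ψ in η..(0 : ℝ), Real.sqrt (2 * ψ) / Real.sqrt (ψ + 2 * η)) =
      2 * Real.log (2 + Real.sqrt 3) / Real.sqrt 3 - 2 := by
  intro η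
  have hη : 0 < η := Real.sqrt_pos.2 (by norm_num)
  set a : ℝ := 2 * η with ha_def
  have ha : 0 < a := by positivity
  set F : ℝ → ℝ := fun ψ =>
    Real.sqrt 2 * (Real.sqrt (ψ * (ψ + a)) -
      a * Real.log (Real.sqrt ψ + Real.sqrt (ψ + a))) with hF
  have key : (∫ ψ in (0:ℝ)..η, Real.sqrt (2 * ψ) / Real.sqrt (ψ + a)) = F η - F 0 := by
    apply intervalIntegral.integral_eq_sub_of_hasDerivAt_of_le hη.le
    · -- continuity
      apply ContinuousOn.mul continuousOn_const
      apply ContinuousOn.sub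
      · exact (Real.continuous_sqrt.comp (continuous_id.mul (continuous_id.add continuous_const))).continuousOn
      · apply ContinuousOn.mul continuousOn_const
        apply ContinuousOn.log
        · exact ((Real.continuous_sqrt).continuousOn.add
            (Real.continuous_sqrt.comp (continuous_id.add continuous_const)).continuousOn)
        · intro x hx
          have hx0 : 0 ≤ x := hx.1
          have : 0 < Real.sqrt (x + a) := Real.sqrt_pos.2 (by linarith)
          have h2 : 0 ≤ Real.sqrt x := Real.sqrt_nonneg x
          positivity
    · intro x hx
      have hx0 : 0 < x := hx.1
      have hxa : 0 < x + a := by linarith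
      have hu : 0 < Real.sqrt x := Real.sqrt_pos.2 hx0
      have hv : 0 < Real.sqrt (x + a) := Real.sqrt_pos.2 hxa
      have hsum : Real.sqrt x + Real.sqrt (x + a) ≠ 0 := by positivity
      have h1 : HasDerivAt (fun ψ : ℝ => ψ * (ψ + a)) (2 * x + a) x := by
        have := (hasDerivAt_id x).mul ((hasDerivAt_id x).add_const a)
        exact this.congr_deriv (by simp only [id_eq]; ring)
      have h1s : HasDerivAt (fun ψ : ℝ => Real.sqrt (ψ * (ψ + a)))
          ((2 * x + a) / (2 * Real.sqrt (x * (x + a)))) x :=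
        h1.sqrt (by positivity)
      have h2a : HasDerivAt (fun ψ : ℝ => Real.sqrt ψ) (1 / (2 * Real.sqrt x)) x :=
        Real.hasDerivAt_sqrt hx0.ne'
      have h2b : HasDerivAt (fun ψ : ℝ => Real.sqrt (ψ + a)) (1 / (2 * Real.sqrt (x + a))) x := by
        have := ((hasDerivAt_id x).add_const a).sqrt (by positivity : x + a ≠ 0)
        simpa using this
      have h3 : HasDerivAt (fun ψ : ℝ => Real.log (Real.sqrt ψ + Real.sqrt (ψ + a)))
          ((1 / (2 * Real.sqrt x) + 1 / (2 * Real.sqrt (x + a))) /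
            (Real.sqrt x + Real.sqrt (x + a))) x :=
        (h2a.add h2b).log hsum
      have hD : HasDerivAt F
          (Real.sqrt 2 * ((2 * x + a) / (2 * Real.sqrt (x * (x + a))) -
            a * ((1 / (2 * Real.sqrt x) + 1 / (2 * Real.sqrt (x + a))) /
              (Real.sqrt x + Real.sqrt (x + a))))) x :=
        ((h1s.sub (h3.const_mul a)).const_mul (Real.sqrt 2))
      refine hD.congr_deriv (Eq.symm ?_)
      have hmul : Real.sqrt (x * (x + a)) = Real.sqrt x * Real.sqrt (x + a) :=
        Real.sqrt_mul hx0.le _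
      have h2x : Real.sqrt (2 * x) = Real.sqrt 2 * Real.sqrt x := Real.sqrt_mul (by norm_num) _
      have hu2 : Real.sqrt x ^ 2 = x := Real.sq_sqrt hx0.le
      have hv2 : Real.sqrt (x + a) ^ 2 = x + a := Real.sq_sqrt hxa.le
      rw [h2x, hmul]
      have key2 : ∀ u v : ℝ, 0 < u → 0 < v → u ^ 2 = x → v ^ 2 = x + a →
          Real.sqrt 2 * u / v = Real.sqrt 2 * ((2 * x + a) / (2 * (u * v)) -
            a * ((1 / (2 * u) + 1 / (2 * v)) / (u + v))) := by
        intro u v hu hv h2 h3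
        have haa : a = v ^ 2 - u ^ 2 := by linarith
        have huv : u + v ≠ 0 := by positivity
        rw [← h2, haa]
        field_simp
        ring
      exact key2 _ _ hu hv hu2 hv2
    · -- integrability
      apply ContinuousOn.intervalIntegrable
      apply ContinuousOn.div
      · exact (Real.continuous_sqrt.comp (continuous_const.mul continuous_id)).continuousOn
      · exact (Real.continuous_sqrt.comp (continuous_id.add continuous_const)).continuousOn
      · intro x hx
        rw [Set.uIcc_of_le hη.le] at hx
        have : 0 < x + a := by have := hx.1; linarith
        exact (Real.sqrt_pos.2 this).ne'
  have hmain : F η - F 0 = 2 - 2 * Real.log (2 + Real.sqrt 3) / Real.sqrt 3 := by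
    have h3η : η + a = 3 * η := by rw [ha_def]; ring
    have e1 : Real.sqrt (η * (η + a)) = Real.sqrt 3 * η := by
      rw [h3η, show η * (3 * η) = 3 * η ^ 2 by ring,
        Real.sqrt_mul (by norm_num : (0:ℝ) ≤ 3), Real.sqrt_sq hη.le]
    have e2 : Real.sqrt (η + a) = Real.sqrt 3 * Real.sqrt η := by
      rw [h3η, Real.sqrt_mul (by norm_num : (0:ℝ) ≤ 3)]
    have e3 : Real.sqrt a = Real.sqrt 2 * Real.sqrt η := by
      rw [ha_def, Real.sqrt_mul (by norm_num : (0:ℝ) ≤ 2)]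
    have hsη : 0 < Real.sqrt η := Real.sqrt_pos.2 hη
    have l1 : Real.log (Real.sqrt η + Real.sqrt 3 * Real.sqrt η)
        = Real.log (1 + Real.sqrt 3) + Real.log (Real.sqrt η) := by
      rw [show Real.sqrt η + Real.sqrt 3 * Real.sqrt η = (1 + Real.sqrt 3) * Real.sqrt η by ring,
        Real.log_mul (by positivity) hsη.ne']
    have l2 : Real.log (Real.sqrt 2 * Real.sqrt η)
        = Real.log (Real.sqrt 2) + Real.log (Real.sqrt η) :=
      Real.log_mul (by positivity) hsη.ne'
    have hlogid : Real.log (1 + Real.sqrt 3) - Real.log (Real.sqrt 2)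
        = Real.log (2 + Real.sqrt 3) / 2 := by
      have s3sq : Real.sqrt 3 ^ 2 = 3 := Real.sq_sqrt (by norm_num)
      have hexp : (1 + Real.sqrt 3) ^ 2 = 2 * (2 + Real.sqrt 3) := by nlinarith [s3sq]
      have ee1 : Real.log ((1 + Real.sqrt 3) ^ 2) = 2 * Real.log (1 + Real.sqrt 3) := by
        rw [Real.log_pow]; push_cast; ring
      have ee2 : Real.log (2 * (2 + Real.sqrt 3)) = Real.log 2 + Real.log (2 + Real.sqrt 3) :=
        Real.log_mul (by norm_num) (by positivity)
      have ee3 : Real.log (Real.sqrt 2) = Real.log 2 / 2 := Real.log_sqrt (by norm_num)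
      rw [hexp] at ee1
      linarith
    have h23 : Real.sqrt 2 * Real.sqrt 3 * η = 2 := by
      rw [show η = Real.sqrt (2 / 3) from rfl,
        ← Real.sqrt_mul (by norm_num : (0:ℝ) ≤ 2) 3,
        ← Real.sqrt_mul (by positivity) (2 / 3),
        show (2:ℝ) * 3 * (2 / 3) = 2 ^ 2 by norm_num, Real.sqrt_sq (by norm_num)]
    have h2η : Real.sqrt 2 * η = 2 / Real.sqrt 3 := by
      rw [show η = Real.sqrt (2 / 3) from rfl,
        ← Real.sqrt_mul (by norm_num : (0:ℝ) ≤ 2) (2 / 3),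
        show (2:ℝ) * (2 / 3) = (2 / Real.sqrt 3) ^ 2 by
          rw [div_pow, Real.sq_sqrt (by norm_num : (0:ℝ) ≤ 3)]; norm_num,
        Real.sqrt_sq (by positivity)]
    have hF0 : F 0 = Real.sqrt 2 * (0 - a * (Real.log (Real.sqrt 2) + Real.log (Real.sqrt η))) := by
      simp only [hF, zero_mul, Real.sqrt_zero, e3, l2, zero_add]
    have hFη2 : F η = Real.sqrt 2 * (Real.sqrt 3 * η
        - a * (Real.log (1 + Real.sqrt 3) + Real.log (Real.sqrt η))) := by
      simp only [hF, e1, e2, l1]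
    rw [hFη2, hF0, ha_def,
      show Real.sqrt 2 * (Real.sqrt 3 * η - 2 * η * (Real.log (1 + Real.sqrt 3) + Real.log (Real.sqrt η)))
          - Real.sqrt 2 * (0 - 2 * η * (Real.log (Real.sqrt 2) + Real.log (Real.sqrt η)))
        = Real.sqrt 2 * Real.sqrt 3 * η - 2 * (Real.sqrt 2 * η) *
            (Real.log (1 + Real.sqrt 3) - Real.log (Real.sqrt 2)) by ring,
      h23, h2η, hlogid]
    have hs3 : Real.sqrt 3 ≠ 0 := by positivity
    field_simp
  rw [intervalIntegral.integral_symm, key, hmain]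
  ring
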